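/- Let v, w : ℝ³ → ℝ be continuously differentiable functions of (t,x,y) solving the system (max): v_t + w_x = 0 and w_t + w_y + v w_x − w v_x = 0, and suppose w is nowhere zero. Then the following three conservation laws hold at every point: (i) ∂_t v + ∂_x w = 0; (ii) ∂_t(v² − w) + ∂_x(v w) − ∂_y w = 0; (iii) ∂_t(1/w) + ∂_x(v/w) + ∂_y(1/w) = 0. -/

import Mathlib

/-- Partial derivative of `f : ℝⁿ → ℝ` in the `i`-th coordinate direction. -/
noncomputable def pd {n : ℕ} (i : Fin n) (f : (Fin n → ℝ) → ℝ) (x : Fin n → ℝ) : ℝ :=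
  fderiv ℝ f x (Pi.single i 1)

lemma pd_add {n : ℕ} (i : Fin n) {f g : (Fin n → ℝ) → ℝ} {x : Fin n → ℝ}
    (hf : DifferentiableAt ℝ f x) (hg : DifferentiableAt ℝ g x) :
    pd i (fun y => f y + g y) x = pd i f x + pd i g x := by
  simp [pd, fderiv_fun_add hf hg]

lemma pd_sub {n : ℕ} (i : Fin n) {f g : (Fin n → ℝ) → ℝ} {x : Fin n → ℝ}
    (hf : DifferentiableAt ℝ f x) (hg : DifferentiableAt ℝ g x) :
    pd i (fun y => f y - g y) x = pd i f x - pd i g x := by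
  simp [pd, fderiv_fun_sub hf hg]

lemma pd_mul {n : ℕ} (i : Fin n) {f g : (Fin n → ℝ) → ℝ} {x : Fin n → ℝ}
    (hf : DifferentiableAt ℝ f x) (hg : DifferentiableAt ℝ g x) :
    pd i (fun y => f y * g y) x = pd i f x * g x + f x * pd i g x := by
  simp [pd, fderiv_fun_mul hf hg, smul_eq_mul]; ring

lemma pd_inv {n : ℕ} (i : Fin n) {f : (Fin n → ℝ) → ℝ} {x : Fin n → ℝ}
    (hf : DifferentiableAt ℝ f x) (hx : f x ≠ 0) :
    pd i (fun y => (f y)⁻¹) x = -pd i f x / (f x) ^ 2 := by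
  have h := ((hasFDerivAt_inv' (𝕜 := ℝ) hx).comp x hf.hasFDerivAt).fderiv
  have : (fun y => (f y)⁻¹) = Inv.inv ∘ f := rfl
  rw [pd, this, h]
  simp only [ContinuousLinearMap.coe_comp', Function.comp_apply,
    ContinuousLinearMap.neg_apply, ContinuousLinearMap.mulLeftRight_apply, pd]
  rw [eq_div_iff (pow_ne_zero 2 hx)]
  field_simp

/-- Coordinates on ℝ³ are `(t,x,y)` with indices `(0,1,2)`.
If C¹ functions `v, w` solve the system (max) and `w` is nowhere zero, then the three
conservation laws hold: `∂_t v + ∂_x w = 0`, `∂_t(v² − w) + ∂_x(vw) − ∂_y w = 0`,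
`∂_t(1/w) + ∂_x(v/w) + ∂_y(1/w) = 0`. -/
theorem stmt5 (v w : (Fin 3 → ℝ) → ℝ) (hv : ContDiff ℝ 1 v) (hw : ContDiff ℝ 1 w)
    (hw0 : ∀ x, w x ≠ 0)
    (h1 : ∀ x, pd 0 v x + pd 1 w x = 0)
    (h2 : ∀ x, pd 0 w x + pd 2 w x + v x * pd 1 w x - w x * pd 1 v x = 0) :
    (∀ x, pd 0 v x + pd 1 w x = 0) ∧
    (∀ x, pd 0 (fun y => (v y) ^ 2 - w y) x + pd 1 (fun y => v y * w y) x - pd 2 w x = 0) ∧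
    (∀ x, pd 0 (fun y => 1 / w y) x + pd 1 (fun y => v y / w y) x
        + pd 2 (fun y => 1 / w y) x = 0) := by
  have hvd : Differentiable ℝ v := hv.differentiable one_ne_zero
  have hwd : Differentiable ℝ w := hw.differentiable one_ne_zero
  refine ⟨h1, ?_, ?_⟩
  · intro x
    have e1 : pd 0 (fun y => (v y) ^ 2 - w y) x
        = (pd 0 v x * v x + v x * pd 0 v x) - pd 0 w x := by
      rw [show (fun y => (v y) ^ 2 - w y) = (fun y => v y * v y - w y) by
        funext y; ring]
      rw [pd_sub 0 (f := fun y => v y * v y) ((hvd x).mul (hvd x)) (hwd x), pd_mul 0 (hvd x) (hvd x)]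
    have e2 := pd_mul 1 (hvd x) (hwd x)
    have g1 := h1 x
    have g2 := h2 x
    rw [e1, e2]
    linear_combination 2 * v x * g1 - g2
  · intro x
    have hwx := hw0 x
    have e0 : ∀ i : Fin 3, pd i (fun y => 1 / w y) x = -pd i w x / (w x) ^ 2 := by
      intro i
      rw [show (fun y => 1 / w y) = (fun y => (w y)⁻¹) by funext y; simp]
      exact pd_inv i (hwd x) hwx
    have e1 : pd 1 (fun y => v y / w y) x
        = pd 1 v x * (w x)⁻¹ + v x * (-pd 1 w x / (w x) ^ 2) := by
      rw [show (fun y => v y / w y) = (fun y => v y * (w y)⁻¹) by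
        funext y; rw [div_eq_mul_inv]]
      rw [pd_mul 1 (g := fun y => (w y)⁻¹) (hvd x) ((hwd x).inv hwx), pd_inv 1 (hwd x) hwx]
    rw [e0 0, e0 2, e1]
    have g2 := h2 x
    field_simp
    linear_combination (-1) * g2
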